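/- For every orientation G of the complete graph K₃ and every n ≥ 3, there exists a partition of [3n] into three n-element dice A₁, A₂, A₃ such that W(A_i, A_j) > n²/2 if and only if v_i → v_j is an edge of G. -/
import Mathlib


/-- Number of winning pairs: pairs (x,y) with x from X, y from Y, and x > y. -/
def W (X Y : Finset ℕ) : ℕ := ((X ×ˢ Y).filter (fun p => p.2 < p.1)).card

/-- A set of n-sided dice: a partition of [3n] into three n-element sets. -/
def IsDice (n : ℕ) (A B C : Finset ℕ) : Prop :=
  A ∪ B ∪ C = Finset.Icc 1 (3 * n) ∧
  A.card = n ∧ B.card = n ∧ C.card = n ∧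
  Disjoint A B ∧ Disjoint A C ∧ Disjoint B C

lemma W_all_gt {X Y : Finset ℕ} (h : ∀ y ∈ Y, ∀ x ∈ X, y < x) :
    W X Y = X.card * Y.card := by
  unfold W
  rw [Finset.filter_true_of_mem, Finset.card_product]
  rintro ⟨x, y⟩ hp
  rw [Finset.mem_product] at hp
  exact h y hp.2 x hp.1

lemma W_all_le {X Y : Finset ℕ} (h : ∀ x ∈ X, ∀ y ∈ Y, x ≤ y) : W X Y = 0 := by
  unfold W
  rw [Finset.card_eq_zero, Finset.filter_eq_empty_iff]
  rintro ⟨x, y⟩ hp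
  rw [Finset.mem_product] at hp
  exact not_lt.2 (h x hp.1 y hp.2)

lemma W_union_left {S T U : Finset ℕ} (h : Disjoint S T) :
    W (S ∪ T) U = W S U + W T U := by
  unfold W
  rw [Finset.union_product, Finset.filter_union, Finset.card_union_of_disjoint]
  refine Finset.disjoint_left.2 ?_
  rintro ⟨x, y⟩ hp hq
  simp only [Finset.mem_filter, Finset.mem_product] at hp hq
  exact (Finset.disjoint_left.1 h) hp.1.1 hq.1.1

lemma W_union_right {S T U : Finset ℕ} (h : Disjoint T U) :
    W S (T ∪ U) = W S T + W S U := by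
  unfold W
  rw [Finset.product_union, Finset.filter_union, Finset.card_union_of_disjoint]
  refine Finset.disjoint_left.2 ?_
  rintro ⟨x, y⟩ hp hq
  simp only [Finset.mem_filter, Finset.mem_product] at hp hq
  exact (Finset.disjoint_left.1 h) hp.1.2 hq.1.2

lemma ico_disj {a b c d : ℕ} (h : b ≤ c ∨ d ≤ a) :
    Disjoint (Finset.Ico a b) (Finset.Ico c d) := by
  rw [Finset.disjoint_left]; intro x; simp only [Finset.mem_Ico]; omega

lemma W_Ico_gt {a k b l : ℕ} (h : b + l ≤ a) :
    W (Finset.Ico a (a+k)) (Finset.Ico b (b+l)) = k * l := by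
  rw [W_all_gt (by intro y hy x hx; simp only [Finset.mem_Ico] at *; omega),
    Nat.card_Ico, Nat.card_Ico, Nat.add_sub_cancel_left, Nat.add_sub_cancel_left]

lemma W_Ico_le {a k b l : ℕ} (h : a + k ≤ b + 1) :
    W (Finset.Ico a (a+k)) (Finset.Ico b (b+l)) = 0 :=
  W_all_le (by intro x hx y hy; simp only [Finset.mem_Ico] at *; omega)

/-- Transitive dice: X beats Y beats Z, and X beats Z. -/
lemma tra_dice (n : ℕ) (hn : 1 ≤ n) : ∃ X Y Z : Finset ℕ,
    X ∪ Y ∪ Z = Finset.Icc 1 (3*n) ∧ X.card = n ∧ Y.card = n ∧ Z.card = n ∧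
    Disjoint X Y ∧ Disjoint X Z ∧ Disjoint Y Z ∧
    2 * W X Y > n^2 ∧ 2 * W Y Z > n^2 ∧ 2 * W X Z > n^2 ∧
    ¬(2 * W Y X > n^2) ∧ ¬(2 * W Z Y > n^2) ∧ ¬(2 * W Z X > n^2) := by
  refine ⟨Finset.Ico (2*n+1) (2*n+1+n), Finset.Ico (n+1) (n+1+n), Finset.Ico 1 (1+n),
    ?_, ?_, ?_, ?_, ico_disj (by omega), ico_disj (by omega), ico_disj (by omega),
    ?_, ?_, ?_, ?_, ?_, ?_⟩
  · ext a; simp only [Finset.mem_union, Finset.mem_Ico, Finset.mem_Icc]; omega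
  · rw [Nat.card_Ico]; omega
  · rw [Nat.card_Ico]; omega
  · rw [Nat.card_Ico]; omega
  · rw [W_Ico_gt (by omega)]; nlinarith
  · rw [W_Ico_gt (by omega)]; nlinarith
  · rw [W_Ico_gt (by omega)]; nlinarith
  · rw [W_Ico_le (by omega)]; omega
  · rw [W_Ico_le (by omega)]; omega
  · rw [W_Ico_le (by omega)]; omega

/-- Cyclic (non-transitive) dice: X beats Y beats Z beats X. -/
lemma cyc_dice (n : ℕ) (hn : 3 ≤ n) : ∃ X Y Z : Finset ℕ,
    X ∪ Y ∪ Z = Finset.Icc 1 (3*n) ∧ X.card = n ∧ Y.card = n ∧ Z.card = n ∧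
    Disjoint X Y ∧ Disjoint X Z ∧ Disjoint Y Z ∧
    2 * W X Y > n^2 ∧ 2 * W Y Z > n^2 ∧ 2 * W Z X > n^2 ∧
    ¬(2 * W Y X > n^2) ∧ ¬(2 * W Z Y > n^2) ∧ ¬(2 * W X Z > n^2) := by
  by_cases hn4 : n = 4
  · subst hn4
    exact ⟨{4,5,6,12}, {2,3,10,11}, {1,7,8,9}, by decide, by decide, by decide, by decide,
      by decide, by decide, by decide, by decide, by decide, by decide,
      by decide, by decide, by decide⟩
  obtain ⟨c, d, hcd, hcase⟩ :
      ∃ c d, n = c + d ∧ ((d = c+1 ∧ 1 ≤ c) ∨ (d = c+2 ∧ 2 ≤ c)) :=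
    ⟨(n-1)/2, n - (n-1)/2, by omega, by omega⟩
  refine ⟨Finset.Ico (n+1) (n+1+n),
    Finset.Ico (c+1) (c+1+d) ∪ Finset.Ico (2*n+d+1) (2*n+d+1+c),
    Finset.Ico 1 (1+c) ∪ Finset.Ico (2*n+1) (2*n+1+d),
    ?_, ?_, ?_, ?_, ?_, ?_, ?_, ?_, ?_, ?_, ?_, ?_, ?_⟩
  · ext a
    simp only [Finset.mem_union, Finset.mem_Ico, Finset.mem_Icc]; omega
  · rw [Nat.card_Ico]; omega
  · rw [Finset.card_union_of_disjoint (ico_disj (by omega)), Nat.card_Ico, Nat.card_Ico]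
    omega
  · rw [Finset.card_union_of_disjoint (ico_disj (by omega)), Nat.card_Ico, Nat.card_Ico]
    omega
  · rw [Finset.disjoint_left]; intro x
    simp only [Finset.mem_union, Finset.mem_Ico]; omega
  · rw [Finset.disjoint_left]; intro x
    simp only [Finset.mem_union, Finset.mem_Ico]; omega
  · rw [Finset.disjoint_left]; intro x
    simp only [Finset.mem_union, Finset.mem_Ico]; omega
  · rw [W_union_right (ico_disj (by omega)), W_Ico_gt (by omega), W_Ico_le (by omega)]
    rcases hcase with ⟨h1, h2⟩ | ⟨h1, h2⟩ <;> subst h1 <;> subst hcd <;> nlinarith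
  · rw [W_union_left (ico_disj (by omega)),
      W_union_right (ico_disj (by omega)), W_union_right (ico_disj (by omega)),
      W_Ico_gt (by omega), W_Ico_le (by omega), W_Ico_gt (by omega), W_Ico_gt (by omega)]
    rcases hcase with ⟨h1, h2⟩ | ⟨h1, h2⟩ <;> subst h1 <;> subst hcd <;> nlinarith
  · rw [W_union_left (ico_disj (by omega)), W_Ico_le (by omega), W_Ico_gt (by omega)]
    rcases hcase with ⟨h1, h2⟩ | ⟨h1, h2⟩ <;> subst h1 <;> subst hcd <;> nlinarith
  · rw [W_union_left (ico_disj (by omega)), W_Ico_le (by omega), W_Ico_gt (by omega)]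
    rcases hcase with ⟨h1, h2⟩ | ⟨h1, h2⟩ <;> subst h1 <;> subst hcd <;> nlinarith
  · rw [W_union_left (ico_disj (by omega)),
      W_union_right (ico_disj (by omega)), W_union_right (ico_disj (by omega)),
      W_Ico_le (by omega), W_Ico_le (by omega), W_Ico_gt (by omega), W_Ico_le (by omega)]
    rcases hcase with ⟨h1, h2⟩ | ⟨h1, h2⟩ <;> subst h1 <;> subst hcd <;> nlinarith
  · rw [W_union_right (ico_disj (by omega)), W_Ico_gt (by omega), W_Ico_le (by omega)]
    rcases hcase with ⟨h1, h2⟩ | ⟨h1, h2⟩ <;> subst h1 <;> subst hcd <;> nlinarith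

lemma assemble (n : ℕ) (G : Fin 3 → Fin 3 → Prop) (X Y Z : Finset ℕ)
    (hU : X ∪ Y ∪ Z = Finset.Icc 1 (3*n))
    (hX : X.card = n) (hY : Y.card = n) (hZ : Z.card = n)
    (dXY : Disjoint X Y) (dXZ : Disjoint X Z) (dYZ : Disjoint Y Z)
    (w01 : 2 * W X Y > n^2 ↔ G 0 1) (w10 : 2 * W Y X > n^2 ↔ G 1 0)
    (w02 : 2 * W X Z > n^2 ↔ G 0 2) (w20 : 2 * W Z X > n^2 ↔ G 2 0)
    (w12 : 2 * W Y Z > n^2 ↔ G 1 2) (w21 : 2 * W Z Y > n^2 ↔ G 2 1) :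
    ∃ A : Fin 3 → Finset ℕ,
      ((A 0) ∪ (A 1) ∪ (A 2) = Finset.Icc 1 (3 * n)) ∧
      (∀ i, (A i).card = n) ∧
      (∀ i j : Fin 3, i ≠ j → Disjoint (A i) (A j)) ∧
      (∀ i j : Fin 3, i ≠ j → (2 * W (A i) (A j) > n ^ 2 ↔ G i j)) := by
  refine ⟨![X, Y, Z], by simpa using hU, ?_, ?_, ?_⟩
  · intro i; fin_cases i <;> simpa
  · intro i j hij
    fin_cases i <;> fin_cases j <;>
      simp only [Fin.mk_zero, Fin.mk_one, Matrix.cons_val_zero, Matrix.cons_val_one,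
        Matrix.head_cons, Matrix.cons_val_two, Matrix.tail_cons] <;>
      first
        | exact absurd rfl hij
        | exact dXY | exact dXY.symm | exact dXZ | exact dXZ.symm
        | exact dYZ | exact dYZ.symm
  · intro i j hij
    fin_cases i <;> fin_cases j <;>
      simp only [Fin.mk_zero, Fin.mk_one, Matrix.cons_val_zero, Matrix.cons_val_one,
        Matrix.head_cons, Matrix.cons_val_two, Matrix.tail_cons] <;>
      first
        | exact absurd rfl hij
        | exact w01 | exact w10 | exact w02 | exact w20 | exact w12 | exact w21

theorem stmt17 (n : ℕ) (hn : 3 ≤ n) (G : Fin 3 → Fin 3 → Prop)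
    (hG : ∀ i j : Fin 3, i ≠ j → (G i j ↔ ¬ G j i)) :
    ∃ A : Fin 3 → Finset ℕ,
      ((A 0) ∪ (A 1) ∪ (A 2) = Finset.Icc 1 (3 * n)) ∧
      (∀ i, (A i).card = n) ∧
      (∀ i j : Fin 3, i ≠ j → Disjoint (A i) (A j)) ∧
      (∀ i j : Fin 3, i ≠ j → (2 * W (A i) (A j) > n ^ 2 ↔ G i j)) := by
  classical
  have hn1 : 1 ≤ n := by omega
  by_cases h01 : G 0 1 <;> by_cases h12 : G 1 2 <;> by_cases h02 : G 0 2
  -- case TTT: cycle? G01 G12 G02 : transitive 0>1>2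
  · obtain ⟨X, Y, Z, hU, hX, hY, hZ, dXY, dXZ, dYZ, wXY, wYZ, wXZ, wYX, wZY, wZX⟩ :=
      tra_dice n hn1
    have g10 : ¬ G 1 0 := (hG 0 1 (by decide)).1 h01
    have g21 : ¬ G 2 1 := (hG 1 2 (by decide)).1 h12
    have g20 : ¬ G 2 0 := (hG 0 2 (by decide)).1 h02
    exact assemble n G X Y Z hU hX hY hZ dXY dXZ dYZ
      (iff_of_true wXY h01) (iff_of_false wYX g10)
      (iff_of_true wXZ h02) (iff_of_false wZX g20)
      (iff_of_true wYZ h12) (iff_of_false wZY g21)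
  -- case TTF: G01 G12 ¬G02 ⟹ G20 : cycle 0→1→2→0
  · obtain ⟨X, Y, Z, hU, hX, hY, hZ, dXY, dXZ, dYZ, wXY, wYZ, wZX, wYX, wZY, wXZ⟩ :=
      cyc_dice n hn
    have g10 : ¬ G 1 0 := (hG 0 1 (by decide)).1 h01
    have g21 : ¬ G 2 1 := (hG 1 2 (by decide)).1 h12
    have g20 : G 2 0 := (hG 2 0 (by decide)).2 h02
    exact assemble n G X Y Z hU hX hY hZ dXY dXZ dYZ
      (iff_of_true wXY h01) (iff_of_false wYX g10)
      (iff_of_false wXZ h02) (iff_of_true wZX g20)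
      (iff_of_true wYZ h12) (iff_of_false wZY g21)
  -- case TFT: G01 ¬G12 G02 ⟹ G21 : transitive 0>2>1, X=A0, Y=A2, Z=A1
  · obtain ⟨X, Y, Z, hU, hX, hY, hZ, dXY, dXZ, dYZ, wXY, wYZ, wXZ, wYX, wZY, wZX⟩ :=
      tra_dice n hn1
    have g10 : ¬ G 1 0 := (hG 0 1 (by decide)).1 h01
    have g21 : G 2 1 := (hG 2 1 (by decide)).2 h12
    have g20 : ¬ G 2 0 := (hG 0 2 (by decide)).1 h02
    have hU' : X ∪ Z ∪ Y = Finset.Icc 1 (3*n) := by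
      rw [show X ∪ Z ∪ Y = X ∪ Y ∪ Z by ext a; simp only [Finset.mem_union]; tauto, hU]
    exact assemble n G X Z Y hU' hX hZ hY dXZ dXY dYZ.symm
      (iff_of_true wXZ h01) (iff_of_false wZX g10)
      (iff_of_true wXY h02) (iff_of_false wYX g20)
      (iff_of_false wZY h12) (iff_of_true wYZ g21)
  -- case TFF: G01 ¬G12 ¬G02 ⟹ G21, G20 : transitive 2>0>1, X=A2, Y=A0, Z=A1
  · obtain ⟨X, Y, Z, hU, hX, hY, hZ, dXY, dXZ, dYZ, wXY, wYZ, wXZ, wYX, wZY, wZX⟩ :=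
      tra_dice n hn1
    have g10 : ¬ G 1 0 := (hG 0 1 (by decide)).1 h01
    have g21 : G 2 1 := (hG 2 1 (by decide)).2 h12
    have g20 : G 2 0 := (hG 2 0 (by decide)).2 h02
    have hU' : Y ∪ Z ∪ X = Finset.Icc 1 (3*n) := by
      rw [show Y ∪ Z ∪ X = X ∪ Y ∪ Z by ext a; simp only [Finset.mem_union]; tauto, hU]
    exact assemble n G Y Z X hU' hY hZ hX dYZ dXY.symm dXZ.symm
      (iff_of_true wYZ h01) (iff_of_false wZY g10)
      (iff_of_false wYX h02) (iff_of_true wXY g20)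
      (iff_of_false wZX h12) (iff_of_true wXZ g21)
  -- case FTT: ¬G01 G12 G02 ⟹ G10 : transitive? G10, G12, G02: 1>0? no: 1 beats 0 and 2; 0 beats 2: 1>0>2, X=A1,Y=A0,Z=A2
  · obtain ⟨X, Y, Z, hU, hX, hY, hZ, dXY, dXZ, dYZ, wXY, wYZ, wXZ, wYX, wZY, wZX⟩ :=
      tra_dice n hn1
    have g10 : G 1 0 := (hG 1 0 (by decide)).2 h01
    have g21 : ¬ G 2 1 := (hG 1 2 (by decide)).1 h12
    have g20 : ¬ G 2 0 := (hG 0 2 (by decide)).1 h02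
    have hU' : Y ∪ X ∪ Z = Finset.Icc 1 (3*n) := by
      rw [show Y ∪ X ∪ Z = X ∪ Y ∪ Z by ext a; simp only [Finset.mem_union]; tauto, hU]
    exact assemble n G Y X Z hU' hY hX hZ dXY.symm dYZ dXZ
      (iff_of_false wYX h01) (iff_of_true wXY g10)
      (iff_of_true wYZ h02) (iff_of_false wZY g20)
      (iff_of_true wXZ h12) (iff_of_false wZX g21)
  -- case FTF: ¬G01 G12 ¬G02 ⟹ G10, G20 : G12, G10, G20: 1>2? 1 beats 2,0; 2 beats 0: 1>2>0, X=A1,Y=A2,Z=A0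
  · obtain ⟨X, Y, Z, hU, hX, hY, hZ, dXY, dXZ, dYZ, wXY, wYZ, wXZ, wYX, wZY, wZX⟩ :=
      tra_dice n hn1
    have g10 : G 1 0 := (hG 1 0 (by decide)).2 h01
    have g21 : ¬ G 2 1 := (hG 1 2 (by decide)).1 h12
    have g20 : G 2 0 := (hG 2 0 (by decide)).2 h02
    have hU' : Z ∪ X ∪ Y = Finset.Icc 1 (3*n) := by
      rw [show Z ∪ X ∪ Y = X ∪ Y ∪ Z by ext a; simp only [Finset.mem_union]; tauto, hU]
    exact assemble n G Z X Y hU' hZ hX hY dXZ.symm dYZ.symm dXY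
      (iff_of_false wZX h01) (iff_of_true wXZ g10)
      (iff_of_false wZY h02) (iff_of_true wYZ g20)
      (iff_of_true wXY h12) (iff_of_false wYX g21)
  -- case FFT: ¬G01 ¬G12 G02 ⟹ G10, G21 : G02, G10? check: 0 beats 2, 1 beats 0, 2 beats 1: cycle 0→2→1→0
  · obtain ⟨X, Y, Z, hU, hX, hY, hZ, dXY, dXZ, dYZ, wXY, wYZ, wZX, wYX, wZY, wXZ⟩ :=
      cyc_dice n hn
    have g10 : G 1 0 := (hG 1 0 (by decide)).2 h01
    have g21 : G 2 1 := (hG 2 1 (by decide)).2 h12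
    have g20 : ¬ G 2 0 := (hG 0 2 (by decide)).1 h02
    have hU' : X ∪ Z ∪ Y = Finset.Icc 1 (3*n) := by
      rw [show X ∪ Z ∪ Y = X ∪ Y ∪ Z by ext a; simp only [Finset.mem_union]; tauto, hU]
    exact assemble n G X Z Y hU' hX hZ hY dXZ dXY dYZ.symm
      (iff_of_false wXZ h01) (iff_of_true wZX g10)
      (iff_of_true wXY h02) (iff_of_false wYX g20)
      (iff_of_false wZY h12) (iff_of_true wYZ g21)
  -- case FFF: G10, G21, G20 : transitive 2>1>0, X=A2,Y=A1,Z=A0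
  · obtain ⟨X, Y, Z, hU, hX, hY, hZ, dXY, dXZ, dYZ, wXY, wYZ, wXZ, wYX, wZY, wZX⟩ :=
      tra_dice n hn1
    have g10 : G 1 0 := (hG 1 0 (by decide)).2 h01
    have g21 : G 2 1 := (hG 2 1 (by decide)).2 h12
    have g20 : G 2 0 := (hG 2 0 (by decide)).2 h02
    have hU' : Z ∪ Y ∪ X = Finset.Icc 1 (3*n) := by
      rw [show Z ∪ Y ∪ X = X ∪ Y ∪ Z by ext a; simp only [Finset.mem_union]; tauto, hU]
    exact assemble n G Z Y X hU' hZ hY hX dYZ.symm dXZ.symm dXY.symm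
      (iff_of_false wZY h01) (iff_of_true wYZ g10)
      (iff_of_false wZX h02) (iff_of_true wXZ g20)
      (iff_of_false wYX h12) (iff_of_true wXY g21)
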